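/- (Proposition 1) Let R̃ : ℝ → ℝ^{3×3} be a curve, t ∈ ℝ, and let ω_m, β, β̂, u, w ∈ ℝ³ with β̃ := β − β̂. Suppose R̃(t) ∈ SO(3) with tr[R̃(t)] ≠ −1, and that R̃ has derivative D := R̃(t)·ω_m^× − ω_m^×·R̃(t) − R̃(t)·β^× + β̂^×·R̃(t) + R̃(t)·u^× − w^×·R̃(t) at t (in the sense of HasDerivAt). Then the curve s ↦ e_R(R̃(s)) has derivative at t equal to e_R(R̃(t))^×·(ω_m − β̂) + E(R̃(t))·(u − β̃) − E(R̃(t))ᵀ·w. -/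

import Mathlib

open Matrix

noncomputable section

/-- The cross (hat) map: `x^×` with `x^× y = x × y`. -/
def cross3 (x : Fin 3 → ℝ) : Matrix (Fin 3) (Fin 3) ℝ :=
  !![0, -x 2, x 1; x 2, 0, -x 0; -x 1, x 0, 0]

/-- The vee map: `A∨ = (A₃₂, A₁₃, A₂₁)`. -/
def vee3 (A : Matrix (Fin 3) (Fin 3) ℝ) : Fin 3 → ℝ :=
  ![A 2 1, A 0 2, A 1 0]

/-- The Rodrigues matrix `R(α,θ) = I + sin θ · α^× + (1-cos θ) · α^×α^×`. -/
def rod (α : Fin 3 → ℝ) (θ : ℝ) : Matrix (Fin 3) (Fin 3) ℝ :=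
  1 + Real.sin θ • cross3 α + (1 - Real.cos θ) • (cross3 α * cross3 α)

/-- The error vector `ψ(R) = ½(R - Rᵀ)∨`. -/
def psi3 (R : Matrix (Fin 3) (Fin 3) ℝ) : Fin 3 → ℝ :=
  (1 / 2 : ℝ) • vee3 (R - Rᵀ)

/-- The generalized error vector `e_R(R) = (1/√(1+tr R)) (R - Rᵀ)∨`. -/
def eR (R : Matrix (Fin 3) (Fin 3) ℝ) : Fin 3 → ℝ :=
  (1 / Real.sqrt (1 + R.trace)) • vee3 (R - Rᵀ)

/-- `E_c(R) = ½((tr R)·I - Rᵀ)`. -/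
def Ec (R : Matrix (Fin 3) (Fin 3) ℝ) : Matrix (Fin 3) (Fin 3) ℝ :=
  (1 / 2 : ℝ) • (R.trace • (1 : Matrix (Fin 3) (Fin 3) ℝ) - Rᵀ)

/-- `E(R) = (1/√(1+tr R))(2E_c(R) + ½ e_R e_Rᵀ)`. -/
def Emat (R : Matrix (Fin 3) (Fin 3) ℝ) : Matrix (Fin 3) (Fin 3) ℝ :=
  (1 / Real.sqrt (1 + R.trace)) •
    ((2 : ℝ) • Ec R + (1 / 2 : ℝ) • vecMulVec (eR R) (eR R))

attribute [local instance] Matrix.normedAddCommGroup Matrix.normedSpace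


lemma interval_aux (x : ℝ) (hq : 0 ≤ (1 + x) * (3 - x)) (h3 : x ≤ 3) : -1 ≤ x := by
  nlinarith

lemma trace_pos_aux (R : Matrix (Fin 3) (Fin 3) ℝ)
    (hR1 : Rᵀ * R = 1) (hR2 : R * Rᵀ = 1) (hR3 : R.det = 1)
    (htr : R.trace ≠ -1) : 0 < 1 + R.trace := by
  have hadj : adjugate R = Rᵀ := by
    have h1 : R * adjugate R = 1 := by rw [Matrix.mul_adjugate, hR3, one_smul]
    calc adjugate R = (Rᵀ * R) * adjugate R := by rw [hR1, one_mul]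
      _ = Rᵀ * (R * adjugate R) := by rw [Matrix.mul_assoc]
      _ = Rᵀ := by rw [h1, mul_one]
  rw [adjugate_fin_three] at hadj
  have c0 : R 1 1 * R 2 2 - R 1 2 * R 2 1 = R 0 0 := by
    have := congrFun (congrFun hadj 0) 0; simpa using this
  have c1 : R 0 0 * R 2 2 - R 0 2 * R 2 0 = R 1 1 := by
    have := congrFun (congrFun hadj 1) 1; simpa using this
  have c2 : R 0 0 * R 1 1 - R 0 1 * R 1 0 = R 2 2 := by
    have := congrFun (congrFun hadj 2) 2; simpa using this
  have hrow : ∀ i : Fin 3, R i 0 * R i 0 + R i 1 * R i 1 + R i 2 * R i 2 = 1 := by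
    intro i
    have := congrFun (congrFun hR2 i) i
    simpa [Matrix.mul_apply, Fin.sum_univ_three] using this
  have h0 := hrow 0; have h1 := hrow 1; have h2 := hrow 2
  rw [Matrix.trace_fin_three] at htr ⊢
  have key : (1 + (R 0 0 + R 1 1 + R 2 2)) * (3 - (R 0 0 + R 1 1 + R 2 2)) =
      (R 2 1 - R 1 2)^2 + (R 0 2 - R 2 0)^2 + (R 1 0 - R 0 1)^2 := by
    linear_combination -2*c0 - 2*c1 - 2*c2 - h0 - h1 - h2
  have hle0 : R 0 0 ≤ 1 := by
    nlinarith [h0, sq_nonneg (R 0 1), sq_nonneg (R 0 2), sq_nonneg (R 0 0 - 1)]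
  have hle1 : R 1 1 ≤ 1 := by
    nlinarith [h1, sq_nonneg (R 1 0), sq_nonneg (R 1 2), sq_nonneg (R 1 1 - 1)]
  have hle2 : R 2 2 ≤ 1 := by
    nlinarith [h2, sq_nonneg (R 2 0), sq_nonneg (R 2 1), sq_nonneg (R 2 2 - 1)]
  have h3 : R 0 0 + R 1 1 + R 2 2 ≤ 3 := by linarith
  have hq : 0 ≤ (1 + (R 0 0 + R 1 1 + R 2 2)) * (3 - (R 0 0 + R 1 1 + R 2 2)) := by
    rw [key]; positivity
  have hge : -1 ≤ R 0 0 + R 1 1 + R 2 2 := interval_aux _ hq h3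
  rcases hge.lt_or_eq with h | h
  · linarith
  · exact absurd h.symm htr

set_option maxHeartbeats 2000000 in
/-- Proposition 1: derivative of the generalized estimation error. -/
theorem hasDerivAt_eR_error_dynamics (Rt : ℝ → Matrix (Fin 3) (Fin 3) ℝ) (t : ℝ)
    (ωm β βh u w : Fin 3 → ℝ)
    (hR1 : (Rt t)ᵀ * Rt t = 1) (hR2 : Rt t * (Rt t)ᵀ = 1) (hR3 : (Rt t).det = 1)
    (htr : (Rt t).trace ≠ -1)
    (hD : HasDerivAt Rt
      (Rt t * cross3 ωm - cross3 ωm * Rt t - Rt t * cross3 β + cross3 βh * Rt t +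
        Rt t * cross3 u - cross3 w * Rt t) t) :
    HasDerivAt (fun s => eR (Rt s))
      (cross3 (eR (Rt t)) *ᵥ (ωm - βh) + Emat (Rt t) *ᵥ (u - (β - βh)) -
        (Emat (Rt t))ᵀ *ᵥ w) t := by
  have hpos : 0 < 1 + (Rt t).trace := trace_pos_aux _ hR1 hR2 hR3 htr
  set D := Rt t * cross3 ωm - cross3 ωm * Rt t - Rt t * cross3 β + cross3 βh * Rt t +
        Rt t * cross3 u - cross3 w * Rt t with hDdef
  have hentry : ∀ i j, HasDerivAt (fun x => Rt x i j) (D i j) t := fun i j =>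
    hasDerivAt_pi.1 (hasDerivAt_pi.1 hD i) j
  have htrace : HasDerivAt (fun x => (Rt x).trace) (D 0 0 + D 1 1 + D 2 2) t := by
    simp only [Matrix.trace_fin_three]
    exact ((hentry 0 0).add (hentry 1 1)).add (hentry 2 2)
  have hne : (1 : ℝ) + (Rt t).trace ≠ 0 := hpos.ne'
  have hs0 : Real.sqrt (1 + (Rt t).trace) ≠ 0 := (Real.sqrt_pos.2 hpos).ne'
  have hs2 : Real.sqrt (1 + (Rt t).trace) * Real.sqrt (1 + (Rt t).trace)
      = 1 + (Rt t).trace := Real.mul_self_sqrt hpos.le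
  have hsq : HasDerivAt (fun x => Real.sqrt (1 + (Rt x).trace))
      (1 / (2 * Real.sqrt (1 + (Rt t).trace)) * (D 0 0 + D 1 1 + D 2 2)) t :=
    (Real.hasDerivAt_sqrt hne).comp t (htrace.const_add 1)
  have hinv : HasDerivAt (fun x => (Real.sqrt (1 + (Rt x).trace))⁻¹)
      (-(1 / (2 * Real.sqrt (1 + (Rt t).trace)) * (D 0 0 + D 1 1 + D 2 2)) /
        Real.sqrt (1 + (Rt t).trace) ^ 2) t := hsq.inv hs0
  rw [Matrix.trace_fin_three] at hne hs0 hs2 hinv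
  apply hasDerivAt_pi.2
  intro i
  fin_cases i
  · show HasDerivAt (fun x => eR (Rt x) 0)
      ((cross3 (eR (Rt t)) *ᵥ (ωm - βh) + Emat (Rt t) *ᵥ (u - (β - βh)) -
        (Emat (Rt t))ᵀ *ᵥ w) 0) t
    have hfun : (fun x => eR (Rt x) 0) =
        fun x => (Real.sqrt (1 + (Rt x).trace))⁻¹ * (Rt x 2 1 - Rt x 1 2) := by
      funext x; simp [eR, vee3, one_div]
    rw [hfun]
    refine (hinv.mul ((hentry 2 1).sub (hentry 1 2))).congr_deriv ?_
    simp [Emat, Ec, eR, cross3, vee3, hDdef, Matrix.mulVec, Matrix.vecMul, Matrix.vecHead,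
      Matrix.vecTail, dotProduct, Fin.sum_univ_three, Matrix.trace_fin_three,
      vecMulVec_apply, Matrix.mul_apply, Matrix.one_apply, Matrix.of_apply, Pi.smul_apply,
      smul_eq_mul, one_div]
    field_simp
    ring
  · show HasDerivAt (fun x => eR (Rt x) 1)
      ((cross3 (eR (Rt t)) *ᵥ (ωm - βh) + Emat (Rt t) *ᵥ (u - (β - βh)) -
        (Emat (Rt t))ᵀ *ᵥ w) 1) t
    have hfun : (fun x => eR (Rt x) 1) =
        fun x => (Real.sqrt (1 + (Rt x).trace))⁻¹ * (Rt x 0 2 - Rt x 2 0) := by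
      funext x; simp [eR, vee3, one_div]
    rw [hfun]
    refine (hinv.mul ((hentry 0 2).sub (hentry 2 0))).congr_deriv ?_
    simp [Emat, Ec, eR, cross3, vee3, hDdef, Matrix.mulVec, Matrix.vecMul, Matrix.vecHead,
      Matrix.vecTail, dotProduct, Fin.sum_univ_three, Matrix.trace_fin_three,
      vecMulVec_apply, Matrix.mul_apply, Matrix.one_apply, Matrix.of_apply, Pi.smul_apply,
      smul_eq_mul, one_div]
    field_simp
    ring
  · show HasDerivAt (fun x => eR (Rt x) 2)
      ((cross3 (eR (Rt t)) *ᵥ (ωm - βh) + Emat (Rt t) *ᵥ (u - (β - βh)) -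
        (Emat (Rt t))ᵀ *ᵥ w) 2) t
    have hfun : (fun x => eR (Rt x) 2) =
        fun x => (Real.sqrt (1 + (Rt x).trace))⁻¹ * (Rt x 1 0 - Rt x 0 1) := by
      funext x; simp [eR, vee3, one_div]
    rw [hfun]
    refine (hinv.mul ((hentry 1 0).sub (hentry 0 1))).congr_deriv ?_
    simp [Emat, Ec, eR, cross3, vee3, hDdef, Matrix.mulVec, Matrix.vecMul, Matrix.vecHead,
      Matrix.vecTail, dotProduct, Fin.sum_univ_three, Matrix.trace_fin_three,
      vecMulVec_apply, Matrix.mul_apply, Matrix.one_apply, Matrix.of_apply, Pi.smul_apply,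
      smul_eq_mul, one_div]
    field_simp
    ring
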